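/- If vectors d_0,...,d_d in E^{2d-1} = E^d × E^{d-1} satisfy |d_k| = s, d_k · d_j = -s²/d for all k ≠ j, and the first projection π_1(d_k) = a_k·u_k with |a_k| < s (where u_0,...,u_d are the unit vertices of a regular simplex in E^d with u_i·u_j = -1/d), then the second projections w_k = π_2(d_k) ∈ E^{d-1} are nonzero and pairwise obtuse: w_i · w_j < 0 for all i ≠ j. -/

import Mathlib

open scoped RealInnerProductSpace

theorem projections_pairwise_obtuse (d : ℕ) (hd : 2 ≤ d) (s : ℝ) (hs : 0 < s)
    (u : Fin (d + 1) → EuclideanSpace ℝ (Fin d))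
    (hnorm : ∀ i, ‖u i‖ = 1)
    (hinner : ∀ i j, i ≠ j → ⟪u i, u j⟫ = -1 / d)
    (D : Fin (d + 1) → WithLp 2 (EuclideanSpace ℝ (Fin d) × EuclideanSpace ℝ (Fin (d - 1))))
    (a : Fin (d + 1) → ℝ)
    (hDnorm : ∀ k, ‖D k‖ = s)
    (hDinner : ∀ k j, k ≠ j → ⟪D k, D j⟫ = -s ^ 2 / d)
    (hproj : ∀ k, (WithLp.equiv 2
      (EuclideanSpace ℝ (Fin d) × EuclideanSpace ℝ (Fin (d - 1))) (D k)).1 = a k • u k)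
    (ha : ∀ k, |a k| < s) :
    (∀ k, (WithLp.equiv 2
      (EuclideanSpace ℝ (Fin d) × EuclideanSpace ℝ (Fin (d - 1))) (D k)).2 ≠ 0) ∧
    (∀ i j, i ≠ j →
      ⟪(WithLp.equiv 2 (EuclideanSpace ℝ (Fin d) × EuclideanSpace ℝ (Fin (d - 1))) (D i)).2,
       (WithLp.equiv 2 (EuclideanSpace ℝ (Fin d) × EuclideanSpace ℝ (Fin (d - 1))) (D j)).2⟫
        < 0) := by
  have hd0 : (0:ℝ) < d := by positivity
  constructor
  · intro k hk
    have h1 : ‖D k‖ ^ 2 = ‖(D k).ofLp.1‖ ^ 2 + ‖(D k).ofLp.2‖ ^ 2 :=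
      WithLp.prod_norm_sq_eq_of_L2 _
    have h2 : (D k).ofLp.2 = 0 := hk
    have h3 : (D k).ofLp.1 = a k • u k := hproj k
    rw [h2, h3, hDnorm, norm_zero, norm_smul, hnorm] at h1
    simp at h1
    have := ha k
    nlinarith [abs_nonneg (a k), sq_abs (a k)]
  · intro i j hij
    have h1 : ⟪D i, D j⟫ = ⟪(D i).ofLp.1, (D j).ofLp.1⟫ + ⟪(D i).ofLp.2, (D j).ofLp.2⟫ :=
      WithLp.prod_inner_apply _ _
    have hpi : (D i).ofLp.1 = a i • u i := hproj i
    have hpj : (D j).ofLp.1 = a j • u j := hproj j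
    rw [hDinner i j hij, hpi, hpj, real_inner_smul_left, real_inner_smul_right,
      hinner i j hij] at h1
    have hab : a i * a j < s ^ 2 := by
      calc a i * a j ≤ |a i| * |a j| := by
            calc a i * a j ≤ |a i * a j| := le_abs_self _
            _ = |a i| * |a j| := abs_mul _ _
        _ < s * s := mul_lt_mul'' (ha i) (ha j) (abs_nonneg _) (abs_nonneg _)
        _ = s ^ 2 := by ring
    have : ⟪(WithLp.equiv 2 _ (D i)).2, (WithLp.equiv 2 _ (D j)).2⟫
        = (a i * a j - s ^ 2) / d := by
      show ⟪(D i).ofLp.2, (D j).ofLp.2⟫ = _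
      have key : ⟪(D i).ofLp.2, (D j).ofLp.2⟫ = -s ^ 2 / ↑d - a i * (a j * (-1 / ↑d)) := by linarith
      rw [key]; field_simp; ring
    rw [this]
    exact div_neg_of_neg_of_pos (by linarith) hd0
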